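/- Suppose for each n the map f_n is holomorphic near 0 of the form f_n(z) = λ_n^q z + δ_n Σ_{j=2}^q Ã_{n,j} z^j + A_{n,q+1} z^{q+1} + O(z^{q+2}), where δ_n = 1 − λ_n^q → 0, the coefficients Ã_{n,j} are uniformly bounded, A_{n,q+1} → 1, and the O(z^{q+2}) bound is uniform in n. If p_n ≠ 0 is a fixed point of f_n with p_n → 0, then p_n^q = δ_n + o(δ_n) as n → ∞. -/

import Mathlib

open Complex Metric Filter Topology Set Asymptotics

set_option maxHeartbeats 1000000 in
/-- for perturbations `f_n(z) = λ_n^q z + δ_n Σ_{j=2}^q Ã_{n,j} z^j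
+ A_{n,q+1} z^(q+1) + O(z^(q+2))` with `δ_n = 1 - λ_n^q → 0`, uniformly bounded `Ã_{n,j}`,
`A_{n,q+1} → 1`, and uniform remainder, any nonzero fixed points `p_n → 0` of `f_n`
satisfy `p_n^q = δ_n + o(δ_n)`. -/
theorem bifurcated_cycle_asymptotics
    (q : ℕ) (hq : 1 ≤ q) (lam : ℕ → ℂ) (fn : ℕ → ℂ → ℂ)
    (At : ℕ → ℕ → ℂ) (Aq : ℕ → ℂ) (p : ℕ → ℂ) (r C B : ℝ) (hr : 0 < r)
    (hδ : Tendsto (fun n => 1 - (lam n)^q) atTop (𝓝 0))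
    (hδne : ∀ n, (lam n)^q ≠ 1)
    (hbound : ∀ n, ∀ j, 2 ≤ j → j ≤ q → ‖At n j‖ ≤ B)
    (hAq : Tendsto Aq atTop (𝓝 1))
    (hrem : ∀ n, ∀ z ∈ ball (0:ℂ) r,
      ‖fn n z - ((lam n)^q * z
        + (1 - (lam n)^q) * (∑ j ∈ Finset.Icc 2 q, At n j * z^j)
        + Aq n * z^(q+1))‖ ≤ C * ‖z‖ ^ (q+2))
    (hfix : ∀ n, fn n (p n) = p n) (hpne : ∀ n, p n ≠ 0)
    (hpto : Tendsto p atTop (𝓝 0)) :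
    (fun n => (p n)^q - (1 - (lam n)^q)) =o[atTop] fun n => 1 - (lam n)^q := by
  set B' : ℝ := max B 0 with hB'def
  set C' : ℝ := max C 0 with hC'def
  have hB'0 : 0 ≤ B' := le_max_right _ _
  have hC'0 : 0 ≤ C' := le_max_right _ _
  have habs : Tendsto (fun n => ‖p n‖) atTop (𝓝 0) := by
    simpa using hpto.norm
  have hmul : ∀ K : ℝ, Tendsto (fun n => K * ‖p n‖) atTop (𝓝 0) := fun K => by
    simpa using habs.const_mul K
  have hdA : Tendsto (fun n => (4:ℝ) * ‖(1:ℂ) - Aq n‖) atTop (𝓝 0) := by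
    have h0 : Tendsto (fun n => (1:ℂ) - Aq n) atTop (𝓝 (1 - 1)) :=
      tendsto_const_nhds.sub hAq
    rw [sub_self] at h0
    simpa using (h0.norm.const_mul (4:ℝ))
  have hAqabs : Tendsto (fun n => ‖Aq n‖) atTop (𝓝 1) := by
    simpa using hAq.norm
  rw [isLittleO_iff]
  intro ε hε
  have e1 : ∀ᶠ n in atTop, ‖p n‖ < r := habs.eventually_lt_const hr
  have e2 : ∀ᶠ n in atTop, ‖p n‖ < 1 := habs.eventually_lt_const one_pos
  have e3 : ∀ᶠ n in atTop, C' * ‖p n‖ < 1/4 := (hmul C').eventually_lt_const (by norm_num)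
  have e4 : ∀ᶠ n in atTop, (q * B') * ‖p n‖ < 1 := (hmul _).eventually_lt_const one_pos
  have e5 : ∀ᶠ n in atTop, (q * B') * ‖p n‖ < ε/3 := (hmul _).eventually_lt_const (by linarith)
  have e6 : ∀ᶠ n in atTop, (4 * C') * ‖p n‖ < ε/3 := (hmul _).eventually_lt_const (by linarith)
  have e7 : ∀ᶠ n in atTop, (3/4 : ℝ) < ‖Aq n‖ := hAqabs.eventually_const_lt (by norm_num)
  have e8 : ∀ᶠ n in atTop, 4 * ‖(1:ℂ) - Aq n‖ < ε/3 := hdA.eventually_lt_const (by linarith)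
  filter_upwards [e1, e2, e3, e4, e5, e6, e7, e8] with n h1 h2 h3 h4 h5 h6 h7 h8
  set a : ℝ := ‖p n‖ with hadef
  have ha0 : 0 < a := norm_pos_iff.mpr (hpne n)
  set d : ℝ := ‖(1:ℂ) - (lam n)^q‖ with hddef
  have hd0 : 0 < d := norm_pos_iff.mpr (sub_ne_zero.mpr fun h => hδne n h.symm)
  set S : ℂ := ∑ j ∈ Finset.Icc 2 q, At n j * (p n)^j with hSdef
  -- remainder bound at the fixed point
  have hE : ‖(1 - (lam n)^q) * p n - (1 - (lam n)^q) * S - Aq n * (p n)^(q+1)‖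
      ≤ C' * a^(q+2) := by
    have h := hrem n (p n) (by simpa [mem_ball_zero_iff] using h1)
    rw [hfix n] at h
    have heq : p n - ((lam n)^q * p n + (1 - (lam n)^q) * S + Aq n * (p n)^(q+1))
        = (1 - (lam n)^q) * p n - (1 - (lam n)^q) * S - Aq n * (p n)^(q+1) := by ring
    calc ‖(1 - (lam n)^q) * p n - (1 - (lam n)^q) * S - Aq n * (p n)^(q+1)‖
        ≤ C * a^(q+2) := by rw [← heq]; simpa [hadef] using h
      _ ≤ C' * a^(q+2) := by
          apply mul_le_mul_of_nonneg_right (le_max_left _ _) (by positivity)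
  -- bound on S
  have hS : ‖S‖ ≤ (q * B') * a^2 := by
    have hterm : ∀ j ∈ Finset.Icc 2 q, ‖At n j * (p n)^j‖ ≤ B' * a^2 := by
      intro j hj
      obtain ⟨hj2, hjq⟩ := Finset.mem_Icc.mp hj
      rw [norm_mul, norm_pow]
      have hA : ‖At n j‖ ≤ B' := le_trans (by simpa using hbound n j hj2 hjq) (le_max_left _ _)
      have hp2 : a^j ≤ a^2 := pow_le_pow_of_le_one ha0.le h2.le hj2
      exact mul_le_mul hA hp2 (by positivity) hB'0
    calc ‖S‖ ≤ ∑ j ∈ Finset.Icc 2 q, ‖At n j * (p n)^j‖ := norm_sum_le _ _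
      _ ≤ ∑ _j ∈ Finset.Icc 2 q, B' * a^2 := Finset.sum_le_sum hterm
      _ = ((q + 1 - 2 : ℕ) : ℝ) * (B' * a^2) := by
          rw [Finset.sum_const, Nat.card_Icc, nsmul_eq_mul]
      _ ≤ (q : ℝ) * (B' * a^2) := by
          have : ((q + 1 - 2 : ℕ) : ℝ) ≤ (q : ℝ) := Nat.cast_le.mpr (by omega)
          apply mul_le_mul_of_nonneg_right this (by positivity)
      _ = (q * B') * a^2 := by ring
  -- a^q ≤ 4 d
  have hpow1 : a^(q+1) = a^q * a := pow_succ a q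
  have hpow2 : a^(q+2) = a^q * a * a := by rw [pow_succ, pow_succ]
  have hsq : a^2 = a * a := sq a
  have haq : a^q ≤ 4 * d := by
    have key : Aq n * (p n)^(q+1)
        = ((1 - (lam n)^q) * p n - ((1 - (lam n)^q) * p n - (1 - (lam n)^q) * S - Aq n * (p n)^(q+1)))
          - (1 - (lam n)^q) * S := by ring
    have h9 : ‖Aq n * (p n)^(q+1)‖ ≤ d * a + C' * a^(q+2) + d * ‖S‖ := by
      rw [key]
      refine le_trans (norm_sub_le _ _) ?_
      have := norm_sub_le ((1 - (lam n)^q) * p n)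
        ((1 - (lam n)^q) * p n - (1 - (lam n)^q) * S - Aq n * (p n)^(q+1))
      simp only [norm_mul] at *
      have := hE
      nlinarith [norm_nonneg ((1 - (lam n)^q) * p n - (1 - (lam n)^q) * S - Aq n * (p n)^(q+1))]
    rw [norm_mul, norm_pow] at h9
    have hdS : d * ‖S‖ ≤ d * a := by
      have : ‖S‖ ≤ a := by nlinarith [hS, h4, ha0.le]
      exact mul_le_mul_of_nonneg_left this hd0.le
    have hAqn : (3/4 : ℝ) * a^(q+1) ≤ ‖Aq n‖ * a^(q+1) :=
      mul_le_mul_of_nonneg_right h7.le (by positivity)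
    -- (3/4) a^q a ≤ 2 d a + (C' a) (a^q a) ≤ 2 d a + (1/4) a^q a
    have haqnn : (0:ℝ) ≤ a^q := by positivity
    nlinarith [mul_le_mul_of_nonneg_right h3.le (mul_nonneg haqnn ha0.le)]
  -- main estimate
  have key2 : p n * ((p n)^q - (1 - (lam n)^q))
      = (1 - Aq n) * (p n)^(q+1) - (1 - (lam n)^q) * S
        - ((1 - (lam n)^q) * p n - (1 - (lam n)^q) * S - Aq n * (p n)^(q+1)) := by ring
  have hmain : a * ‖(p n)^q - (1 - (lam n)^q)‖
      ≤ ‖(1:ℂ) - Aq n‖ * a^(q+1) + d * ‖S‖ + C' * a^(q+2) := by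
    have e : a * ‖(p n)^q - (1 - (lam n)^q)‖
        = ‖p n * ((p n)^q - (1 - (lam n)^q))‖ := (norm_mul _ _).symm
    rw [e, key2]
    refine le_trans (norm_sub_le _ _) ?_
    have h1' : ‖(1 - Aq n) * (p n)^(q+1) - (1 - (lam n)^q) * S‖
        ≤ ‖(1:ℂ) - Aq n‖ * a^(q+1) + d * ‖S‖ := by
      refine le_trans (norm_sub_le _ _) ?_
      rw [norm_mul, norm_pow, norm_mul]
    linarith [hE]
  have t1 : ‖(1:ℂ) - Aq n‖ * a^(q+1) ≤ (ε/3) * (d * a) := by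
    calc ‖(1:ℂ) - Aq n‖ * a^(q+1) = ‖(1:ℂ) - Aq n‖ * (a^q * a) := by rw [hpow1]
      _ ≤ ‖(1:ℂ) - Aq n‖ * ((4*d) * a) :=
          mul_le_mul_of_nonneg_left
            (mul_le_mul_of_nonneg_right haq ha0.le) (norm_nonneg _)
      _ = (4 * ‖(1:ℂ) - Aq n‖) * (d * a) := by ring
      _ ≤ (ε/3) * (d * a) :=
          mul_le_mul_of_nonneg_right h8.le (mul_nonneg hd0.le ha0.le)
  have t2 : d * ‖S‖ ≤ (ε/3) * (d * a) := by
    calc d * ‖S‖ ≤ d * ((q * B') * a^2) := mul_le_mul_of_nonneg_left hS hd0.le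
      _ = ((q * B') * a) * (d * a) := by rw [hsq]; ring
      _ ≤ (ε/3) * (d * a) := mul_le_mul_of_nonneg_right h5.le (mul_nonneg hd0.le ha0.le)
  have t3 : C' * a^(q+2) ≤ (ε/3) * (d * a) := by
    calc C' * a^(q+2) = C' * (a^q * a * a) := by rw [hpow2]
      _ ≤ C' * ((4*d) * a * a) := by
          apply mul_le_mul_of_nonneg_left _ hC'0
          have := mul_le_mul_of_nonneg_right (mul_le_mul_of_nonneg_right haq ha0.le) ha0.le
          linarith
      _ = ((4 * C') * a) * (d * a) := by ring
      _ ≤ (ε/3) * (d * a) := mul_le_mul_of_nonneg_right h6.le (mul_nonneg hd0.le ha0.le)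
  have hsum : a * ‖(p n)^q - (1 - (lam n)^q)‖ ≤ a * (ε * d) := by
    calc a * ‖(p n)^q - (1 - (lam n)^q)‖
        ≤ ‖(1:ℂ) - Aq n‖ * a^(q+1) + d * ‖S‖ + C' * a^(q+2) := hmain
      _ ≤ (ε/3) * (d * a) + (ε/3) * (d * a) + (ε/3) * (d * a) := by linarith
      _ = a * (ε * d) := by ring
  have hfin : ‖(p n)^q - (1 - (lam n)^q)‖ ≤ ε * d :=
    le_of_mul_le_mul_left hsum ha0
  simpa [hddef] using hfin
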